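/- Let (Y, A, X) be a recollement of abelian categories. If A is well-powered then X and Y are well-powered; conversely, if X and Y are well-powered and Ext^1-groups in A form sets, then A is well-powered. -/

import Mathlib

open CategoryTheory Limits

universe v u u₁ u₂ u₃

set_option linter.unusedSectionVars false
set_option linter.unusedVariables false
set_option maxHeartbeats 1000000


/-- A recollement of categories: adjoint triples `(i^*, i_*, i^!)` and `(j_!, j^*, j_*)`,
with `i_*`, `j_!`, `j_*` fully faithful and the essential image of `i_*` equal to the
kernel of `j^*`. -/
structure Recollement (Y : Type u₁) (A : Type u₂) (X : Type u₃)
    [Category.{v} Y] [Category.{v} A] [Category.{v} X] where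
  /-- `i_* : Y ⥤ A` -/
  iStar : Y ⥤ A
  /-- `i^* : A ⥤ Y` -/
  iUp : A ⥤ Y
  /-- `i^! : A ⥤ Y` -/
  iShriek : A ⥤ Y
  /-- `j^* : A ⥤ X` -/
  jUp : A ⥤ X
  /-- `j_! : X ⥤ A` -/
  jLower : X ⥤ A
  /-- `j_* : X ⥤ A` -/
  jRight : X ⥤ A
  adj_i₁ : iUp ⊣ iStar
  adj_i₂ : iStar ⊣ iShriek
  adj_j₁ : jLower ⊣ jUp
  adj_j₂ : jUp ⊣ jRight
  iStar_full : iStar.Full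
  iStar_faithful : iStar.Faithful
  jLower_full : jLower.Full
  jLower_faithful : jLower.Faithful
  jRight_full : jRight.Full
  jRight_faithful : jRight.Faithful
  essImage_iff : ∀ M : A, iStar.essImage M ↔ IsZero (jUp.obj M)

variable {Y : Type u₁} {A : Type u₂} {X : Type u₃}
  [Category.{v} Y] [Category.{v} A] [Category.{v} X]

/-- The class `C = Ker i^*` of the TTF triple associated to a recollement. -/
def Recollement.C (R : Recollement Y A X) : A → Prop := fun M => IsZero (R.iUp.obj M)

/-- The class `T = Im i_*` of the TTF triple associated to a recollement. -/
def Recollement.T (R : Recollement Y A X) : A → Prop := fun M => R.iStar.essImage M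

/-- The class `F = Ker i^!` of the TTF triple associated to a recollement. -/
def Recollement.F (R : Recollement Y A X) : A → Prop := fun M => IsZero (R.iShriek.obj M)

/-- An (additive) functor between abelian categories is exact if it preserves finite
limits and finite colimits. -/
def IsExactFunctor {C D : Type*} [Category C] [Category D] (G : C ⥤ D) : Prop :=
  Nonempty (PreservesFiniteLimits G) ∧ Nonempty (PreservesFiniteColimits G)

section GenericLemmas

variable {A : Type u₂} [Category.{v} A] [Abelian A]

/-- kernel of cokernel of a subobject's arrow is the subobject itself. -/
lemma monoker {M : A} (X₀ : Subobject M) :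
    kernelSubobject (cokernel.π X₀.arrow) = X₀ := by
  refine le_antisymm ?_ (le_kernelSubobject _ _ (cokernel.condition _))
  exact Subobject.le_of_comm
    (Abelian.monoLift X₀.arrow (kernelSubobject (cokernel.π X₀.arrow)).arrow
      (kernelSubobject_arrow_comp _))
    (Abelian.monoLift_comp _ _ _)

/-- Recovery of a subobject containing `ker π` from its image in the quotient. -/
lemma qrec {M N : A} (π : M ⟶ N) (B : Subobject M)
    (hker : kernelSubobject π ≤ B) :
    kernelSubobject (π ≫ cokernel.π (imageSubobject (B.arrow ≫ π)).arrow) = B := by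
  set f := B.arrow ≫ π with hf
  set D := imageSubobject f with hD
  set q := cokernel.π D.arrow with hq
  refine le_antisymm ?_ (le_kernelSubobject _ _ ?_)
  · set K := kernelSubobject (π ≫ q) with hK
    have h0 : (K.arrow ≫ π) ≫ q = 0 := by
      rw [Category.assoc]; exact kernelSubobject_arrow_comp _
    set d : (K : A) ⟶ (D : A) := Abelian.monoLift D.arrow (K.arrow ≫ π) h0 with hd
    have hdc : d ≫ D.arrow = K.arrow ≫ π := Abelian.monoLift_comp _ _ _
    set e : (B : A) ⟶ (D : A) := factorThruImageSubobject f with he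
    have hec : e ≫ D.arrow = f := imageSubobject_arrow_comp f
    have hepi : Epi (pullback.fst d e) := inferInstance
    set ρ : pullback d e ⟶ M :=
      pullback.fst d e ≫ K.arrow - pullback.snd d e ≫ B.arrow with hρdef
    have hρ : ρ ≫ π = 0 := by
      simp only [hρdef, Preadditive.sub_comp, Category.assoc]
      rw [← hdc, show B.arrow ≫ π = e ≫ D.arrow from hec.symm,
        ← pullback.condition_assoc, sub_self]
    set w : pullback d e ⟶ (kernelSubobject π : A) :=
      factorThruKernelSubobject π ρ hρ with hw
    have hwc : w ≫ (kernelSubobject π).arrow = ρ :=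
      factorThruKernelSubobject_comp_arrow _ _ _
    set ι := Subobject.ofLE _ _ hker with hι
    have hιc : ι ≫ B.arrow = (kernelSubobject π).arrow := Subobject.ofLE_arrow _
    set u : pullback d e ⟶ (B : A) := pullback.snd d e + w ≫ ι with hu
    have huc : u ≫ B.arrow = pullback.fst d e ≫ K.arrow := by
      simp only [hu, Preadditive.add_comp, Category.assoc, hιc, hwc, hρdef]
      abel
    have hk : kernel.ι (pullback.fst d e) ≫ u = 0 := by
      rw [← cancel_mono B.arrow, Category.assoc, huc, zero_comp,
        kernel.condition_assoc, zero_comp]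
    set l : (K : A) ⟶ (B : A) := Abelian.epiDesc (pullback.fst d e) u hk with hl
    have hlc : pullback.fst d e ≫ l = u := Abelian.comp_epiDesc _ _ _
    refine Subobject.le_of_comm l ?_
    rw [← cancel_epi (pullback.fst d e), ← Category.assoc, hlc, huc]
  · rw [← Category.assoc, ← hf, ← imageSubobject_arrow_comp f, Category.assoc,
      cokernel.condition, comp_zero]

end GenericLemmas
section RecLemmas

variable {Y : Type u₁} {A : Type u₂} {X : Type u₃}
  [Category.{v} Y] [Category.{v} A] [Category.{v} X]

variable [Abelian Y] [Abelian A] [Abelian X] (R : Recollement Y A X)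

lemma RjuiZero (W : Y) : IsZero (R.jUp.obj (R.iStar.obj W)) :=
  (R.essImage_iff _).1 (R.iStar.obj_mem_essImage W)

lemma RTmono {P P' : A} (m : P ⟶ P') [Mono m] (h : IsZero (R.jUp.obj P')) :
    IsZero (R.jUp.obj P) := by
  haveI : R.jUp.PreservesMonomorphisms :=
    Functor.preservesMonomorphisms_of_adjunction R.adj_j₁
  exact IsZero.of_mono (R.jUp.map m) h

lemma RcounitIsoT {P : A} (h : IsZero (R.jUp.obj P)) :
    IsIso (R.adj_i₂.counit.app P) := by
  haveI := R.iStar_full; haveI := R.iStar_faithful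
  obtain ⟨W, ⟨φ⟩⟩ := (R.essImage_iff P).2 h
  have nat := R.adj_i₂.counit_naturality φ.hom
  have : R.adj_i₂.counit.app P =
      inv (R.iStar.map (R.iShriek.map φ.hom)) ≫
        R.adj_i₂.counit.app (R.iStar.obj W) ≫ φ.hom := by
    rw [← nat, IsIso.inv_hom_id_assoc]
  rw [this]
  infer_instance

lemma RCTzero {K : A} (hi : IsZero (R.iUp.obj K)) (hj : IsZero (R.jUp.obj K)) :
    IsZero K := by
  haveI := R.iStar_full; haveI := R.iStar_faithful
  haveI := R.adj_i₂.isLeftAdjoint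
  obtain ⟨W, ⟨φ⟩⟩ := (R.essImage_iff K).2 hj
  haveI : IsIso (R.adj_i₁.counit.app W) := inferInstance
  have hW : IsZero W := by
    have h0 : IsZero (R.iUp.obj (R.iStar.obj W)) := IsZero.of_iso hi (R.iUp.mapIso φ)
    exact IsZero.of_epi (R.adj_i₁.counit.app W) h0
  exact IsZero.of_iso (R.iStar.map_isZero hW) φ.symm

lemma RIJzero (X₀ : X) : IsZero (R.iUp.obj (R.jLower.obj X₀)) := by
  rw [IsZero.iff_id_eq_zero]
  apply (R.adj_i₁.homEquiv _ _).injective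
  apply (R.adj_j₁.homEquiv _ _).injective
  exact (RjuiZero R _).eq_of_tgt _ _

lemma RTINJaux (N : A) (t t' : Subobject N)
    [Mono (R.iShriek.map t.arrow)] [Mono (R.iShriek.map t'.arrow)]
    (ht : IsZero (R.jUp.obj ((t : A))))
    (hle : Subobject.mk (R.iShriek.map t.arrow) ≤ Subobject.mk (R.iShriek.map t'.arrow)) :
    t ≤ t' := by
  haveI := R.iStar_full; haveI := R.iStar_faithful
  have hψ := Subobject.ofMkLEMk_comp hle
  set ψ := Subobject.ofMkLEMk _ _ hle with hψdef
  haveI := RcounitIsoT R ht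
  have key : R.iStar.map ψ ≫ R.adj_i₂.counit.app ((t' : A)) ≫ t'.arrow
      = R.adj_i₂.counit.app ((t : A)) ≫ t.arrow := by
    rw [← R.adj_i₂.counit_naturality t'.arrow, ← Functor.map_comp_assoc, hψ,
      R.adj_i₂.counit_naturality t.arrow]
  refine Subobject.le_of_comm
    (inv (R.adj_i₂.counit.app ((t : A))) ≫ R.iStar.map ψ ≫ R.adj_i₂.counit.app ((t' : A))) ?_
  rw [Category.assoc, Category.assoc, key, IsIso.inv_hom_id_assoc]

lemma RCINJaux (M : A) (c c' : Subobject M)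
    [Mono (R.jUp.map c.arrow)] [Mono (R.jUp.map c'.arrow)]
    (hc : IsZero (R.iUp.obj ((c : A)))) (hc' : IsZero (R.iUp.obj ((c' : A))))
    (hle : Subobject.mk (R.jUp.map c.arrow) ≤ Subobject.mk (R.jUp.map c'.arrow)) :
    c ≤ c' := by
  haveI := R.adj_i₁.isLeftAdjoint
  haveI := R.adj_j₁.isRightAdjoint
  haveI := R.adj_j₂.isLeftAdjoint
  haveI : PreservesColimitsOfSize.{0,0} R.iUp := R.adj_i₁.leftAdjoint_preservesColimits
  haveI : PreservesColimitsOfSize.{0,0} R.jUp := R.adj_j₂.leftAdjoint_preservesColimits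
  haveI : PreservesLimitsOfSize.{0,0} R.jUp := R.adj_j₁.rightAdjoint_preservesLimits
  have hψ := Subobject.ofMkLEMk_comp hle
  set ψ := Subobject.ofMkLEMk _ _ hle with hψdef
  set p := pullback.fst c.arrow c'.arrow with hp
  -- `p` is a mono since `c'.arrow` is
  haveI : Mono p := inferInstance
  -- the pullback comparison in X
  have hsplit : Epi (pullback.fst (R.jUp.map c.arrow) (R.jUp.map c'.arrow)) := by
    have hlift : pullback.lift (𝟙 _) ψ (by simpa using hψ.symm) ≫
        pullback.fst (R.jUp.map c.arrow) (R.jUp.map c'.arrow) = 𝟙 _ :=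
      pullback.lift_fst _ _ _
    exact (⟨⟨⟨_, hlift⟩⟩⟩ : IsSplitEpi _).epi
  have hepiJp : Epi (R.jUp.map p) := by
    have := PreservesPullback.iso_hom_fst R.jUp c.arrow c'.arrow
    rw [← this]
    exact epi_comp _ _
  have hzcoker : IsZero (cokernel p) := by
    apply RCTzero R
    · -- i^* of cokernel is zero
      have h1 : IsZero (cokernel (R.iUp.map p)) :=
        IsZero.of_epi (cokernel.π (R.iUp.map p)) hc
      exact IsZero.of_iso h1 (PreservesCokernel.iso R.iUp p)
    · have h1 : IsZero (cokernel (R.jUp.map p)) :=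
        IsZero.of_iso (isZero_zero _) (cokernel.ofEpi _)
      exact IsZero.of_iso h1 (PreservesCokernel.iso R.jUp p)
  haveI : Epi p := by
    apply Abelian.epi_of_cokernel_π_eq_zero
    exact hzcoker.eq_of_tgt _ _
  haveI : IsIso p := isIso_of_mono_of_epi p
  refine Subobject.le_of_comm (inv p ≫ pullback.snd c.arrow c'.arrow) ?_
  rw [Category.assoc, ← pullback.condition, IsIso.inv_hom_id_assoc]

/-- the `C`-coordinate of a subobject: image of the `j`-counit, pushed into `M`. -/
noncomputable def cmSub {M : A} (B : Subobject M) : Subobject M :=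
  Subobject.mk ((imageSubobject (R.adj_j₁.counit.app (B : A))).arrow ≫ B.arrow)

lemma cmSub_le {M : A} (B : Subobject M) : cmSub R B ≤ B := by
  conv_rhs => rw [← Subobject.mk_arrow B]
  exact Subobject.mk_le_mk_of_comm (imageSubobject (R.adj_j₁.counit.app (B : A))).arrow rfl

lemma cmSub_C {M : A} (B : Subobject M) : IsZero (R.iUp.obj ((cmSub R B : A))) := by
  haveI := R.adj_i₁.isLeftAdjoint
  have h1 : IsZero (R.iUp.obj ((imageSubobject (R.adj_j₁.counit.app (B : A)) : A))) :=
    IsZero.of_epi (R.iUp.map (factorThruImageSubobject (R.adj_j₁.counit.app (B : A))))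
      (RIJzero R _)
  exact IsZero.of_iso h1 (R.iUp.mapIso (Subobject.underlyingIso _))

lemma cp_epi {M : A} (B : Subobject M) :
    Epi (R.jUp.map (imageSubobject (R.adj_j₁.counit.app (B : A))).arrow) := by
  haveI := R.adj_j₁.isRightAdjoint
  haveI := R.adj_j₂.isLeftAdjoint
  haveI : PreservesColimitsOfSize.{0,0} R.jUp := R.adj_j₂.leftAdjoint_preservesColimits
  set cp := imageSubobject (R.adj_j₁.counit.app (B : A)) with hcp
  have epi1 : Epi (R.jUp.map (R.adj_j₁.counit.app (B : A))) := by
    refine (⟨⟨⟨R.adj_j₁.unit.app (R.jUp.obj (B : A)), ?_⟩⟩⟩ : IsSplitEpi _).epi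
    exact R.adj_j₁.right_triangle_components (B : A)
  have hz : R.jUp.map (cokernel.π cp.arrow) = 0 := by
    apply zero_of_epi_comp (R.jUp.map (R.adj_j₁.counit.app (B : A)))
    rw [← Functor.map_comp, ← imageSubobject_arrow_comp (R.adj_j₁.counit.app (B : A)),
      Category.assoc, cokernel.condition, comp_zero, Functor.map_zero]
  have h2 : IsZero (R.jUp.obj (cokernel cp.arrow)) :=
    IsZero.of_epi_eq_zero (R.jUp.map (cokernel.π cp.arrow)) hz
  apply Abelian.epi_of_cokernel_π_eq_zero
  have h3 : IsZero (cokernel (R.jUp.map cp.arrow)) :=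
    IsZero.of_iso h2 (PreservesCokernel.iso R.jUp cp.arrow).symm
  exact h3.eq_of_tgt _ _

lemma dSub_T {M : A} (B : Subobject M) :
    IsZero (R.jUp.obj
      ((imageSubobject (B.arrow ≫ cokernel.π (cmSub R B).arrow) : A))) := by
  haveI := R.adj_j₁.isRightAdjoint
  haveI := R.adj_j₂.isLeftAdjoint
  haveI : R.jUp.PreservesMonomorphisms :=
    Functor.preservesMonomorphisms_of_adjunction R.adj_j₁
  set cp := imageSubobject (R.adj_j₁.counit.app (B : A)) with hcp
  set π := cokernel.π (cmSub R B).arrow with hπ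
  have h0 : R.jUp.map (B.arrow ≫ π) = 0 := by
    haveI := cp_epi R B
    apply zero_of_epi_comp (R.jUp.map cp.arrow)
    rw [← Functor.map_comp]
    have hz : cp.arrow ≫ B.arrow ≫ π = 0 := by
      rw [← Category.assoc, ← Subobject.underlyingIso_arrow (cp.arrow ≫ B.arrow),
        Category.assoc]
      have hc : (Subobject.mk (cp.arrow ≫ B.arrow)).arrow ≫ π = 0 :=
        cokernel.condition (cmSub R B).arrow
      rw [hc, comp_zero]
    rw [hz, Functor.map_zero]
  have hD : R.jUp.map (imageSubobject (B.arrow ≫ π)).arrow = 0 := by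
    apply zero_of_epi_comp (R.jUp.map (factorThruImageSubobject (B.arrow ≫ π)))
    rw [← Functor.map_comp, imageSubobject_arrow_comp, h0]
  exact IsZero.of_mono_eq_zero _ hD

include R in
lemma part2small [WellPowered.{v} X] [WellPowered.{v} Y] (M : A) : Small.{v} (Subobject M) := by
  haveI : R.jUp.PreservesMonomorphisms :=
    Functor.preservesMonomorphisms_of_adjunction R.adj_j₁
  haveI : R.iShriek.PreservesMonomorphisms :=
    Functor.preservesMonomorphisms_of_adjunction R.adj_i₂
  let CS := {c : Subobject M // IsZero (R.iUp.obj ((c : A)))}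
  let TS : CS → Type _ := fun c =>
    {t : Subobject (cokernel c.1.arrow) // IsZero (R.jUp.obj ((t : A)))}
  haveI smallC : Small.{v} CS := by
    haveI : Small.{v} (Subobject (R.jUp.obj M)) := WellPowered.subobject_small _
    apply small_of_injective (f := fun c : CS => Subobject.mk (R.jUp.map c.1.arrow))
    intro c c' h
    exact Subtype.ext (le_antisymm (RCINJaux R M c.1 c'.1 c.2 c'.2 h.le)
      (RCINJaux R M c'.1 c.1 c'.2 c.2 h.ge))
  haveI smallT : ∀ c : CS, Small.{v} (TS c) := by
    intro c
    haveI : Small.{v} (Subobject (R.iShriek.obj (cokernel c.1.arrow))) :=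
      WellPowered.subobject_small _
    apply small_of_injective (f := fun t : TS c => Subobject.mk (R.iShriek.map t.1.arrow))
    intro t t' h
    exact Subtype.ext (le_antisymm (RTINJaux R _ t.1 t'.1 t.2 h.le)
      (RTINJaux R _ t'.1 t.1 t'.2 h.ge))
  let Φ : Subobject M → Σ c : CS, TS c := fun B =>
    ⟨⟨cmSub R B, cmSub_C R B⟩,
     ⟨imageSubobject (B.arrow ≫ cokernel.π (cmSub R B).arrow), dSub_T R B⟩⟩
  let recov : (Σ c : CS, TS c) → Subobject M := fun p =>
    kernelSubobject (cokernel.π p.1.1.arrow ≫ cokernel.π p.2.1.arrow)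
  have hLI : Function.LeftInverse recov Φ := by
    intro B
    have h1 : kernelSubobject (cokernel.π (cmSub R B).arrow) ≤ B := by
      rw [monoker]; exact cmSub_le R B
    exact qrec (cokernel.π (cmSub R B).arrow) B h1
  exact small_of_injective hLI.injective

end RecLemmas

section PartOne

lemma part1inj {C : Type u₁} {D : Type u₂} [Category.{v} C] [Category.{u} D]
    (G : C ⥤ D) [G.Full] [G.Faithful] [G.PreservesMonomorphisms] (N₀ : C) :
    Function.Injective (fun B : Subobject N₀ => Subobject.mk (G.map B.arrow)) := by
  intro B B' h
  dsimp at h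
  refine le_antisymm ?_ ?_
  · refine Subobject.le_of_comm (G.preimage (Subobject.ofMkLEMk _ _ h.le))
      (G.map_injective ?_)
    rw [Functor.map_comp, Functor.map_preimage, Subobject.ofMkLEMk_comp]
  · refine Subobject.le_of_comm (G.preimage (Subobject.ofMkLEMk _ _ h.ge))
      (G.map_injective ?_)
    rw [Functor.map_comp, Functor.map_preimage, Subobject.ofMkLEMk_comp]

end PartOne


/-- In a recollement of abelian categories, if the middle term `A` is well-powered then
so are the outer terms `X` and `Y`; conversely, if `X` and `Y` are well-powered and the
Ext¹-groups of `A` form sets, then `A` is well-powered. -/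
theorem recollement_wellPowered [Abelian Y] [Abelian A] [Abelian X]
    (R : Recollement Y A X) :
    (WellPowered.{v} A → WellPowered.{v} X ∧ WellPowered.{v} Y) ∧
      (WellPowered.{v} X → WellPowered.{v} Y → HasExt.{v} A → WellPowered.{v} A) := by
  constructor
  · intro hA
    constructor
    · haveI := R.jRight_full; haveI := R.jRight_faithful
      haveI : R.jRight.PreservesMonomorphisms :=
        Functor.preservesMonomorphisms_of_adjunction R.adj_j₂
      exact ⟨fun X₀ => small_of_injective (part1inj R.jRight X₀)⟩
    · haveI := R.iStar_full; haveI := R.iStar_faithful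
      haveI : R.iStar.PreservesMonomorphisms :=
        Functor.preservesMonomorphisms_of_adjunction R.adj_i₁
      exact ⟨fun Y₀ => small_of_injective (part1inj R.iStar Y₀)⟩
  · intro hX hY _
    exact ⟨fun M => part2small R M⟩
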